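/- Fix integers s ≥ 1, n ≥ 1, m ≥ 1 and z ∈ ℂ^m. Suppose that recovery from the measurements is unique in the following sense: whenever θ, θ′ ∈ ℂ^s both have nonzero pairwise-distinct entries, g, g′ ∈ ℂ^s both have all entries nonzero, and V_n(z)^T V_n(θ) g = V_n(z)^T V_n(θ′) g′, the multiset of pairs {(θ_l, g_l) : 0 ≤ l ≤ s−1} equals the multiset {(θ′_l, g′_l) : 0 ≤ l ≤ s−1}. Then necessarily n ≥ 2s and m ≥ 2s. -/

import Mathlib

open Matrix Finset

/-- The `n × k` Vandermonde matrix with `(j,l)` entry `w_l^j`. -/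
noncomputable def vand (n k : ℕ) (w : Fin k → ℂ) : Matrix (Fin n) (Fin k) ℂ :=
  Matrix.of fun j l => w l ^ (j : ℕ)

lemma aux_main {V : Type*} [AddCommGroup V] [Module ℂ V] (s : ℕ) (hs : 1 ≤ s)
    (f : ℂ → V)
    (huniq : ∀ θ θ' g g' : Fin s → ℂ,
      (∀ l, θ l ≠ 0) → Function.Injective θ →
      (∀ l, θ' l ≠ 0) → Function.Injective θ' →
      (∀ l, g l ≠ 0) → (∀ l, g' l ≠ 0) →
      (∑ l, g l • f (θ l)) = (∑ l, g' l • f (θ' l)) →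
      (Finset.univ.val.map fun l : Fin s => (θ l, g l)) =
        (Finset.univ.val.map fun l : Fin s => (θ' l, g' l)))
    (c : Fin (2 * s) → ℂ)
    (hcsum : ∑ i, c i • f ((((i : ℕ) + 1 : ℕ) : ℂ)) = 0)
    (hcne : ∃ i, c i ≠ 0) : False := by
  classical
  obtain ⟨i₀, hi₀⟩ := hcne
  set tt : Fin (2 * s) → ℂ := fun i => (((i : ℕ) + 1 : ℕ) : ℂ) with htt
  set S : Finset (Fin (2 * s)) := Finset.filter (fun i => c i ≠ 0) Finset.univ with hS
  have hi₀S : i₀ ∈ S := by simp [hS, hi₀]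
  set p : ℕ := S.card with hp
  have hp1 : 1 ≤ p := Finset.card_pos.2 ⟨i₀, hi₀S⟩
  have hp2s : p ≤ 2 * s := by
    have := Finset.card_le_card (Finset.subset_univ S)
    simpa [hp] using this
  set e : Fin p ↪o Fin (2 * s) := S.orderEmbOfFin rfl with he
  have heS : ∀ i : Fin p, e i ∈ S := fun i => S.orderEmbOfFin_mem rfl i
  have hcnz : ∀ i : Fin p, c (e i) ≠ 0 := fun i => (Finset.mem_filter.1 (heS i)).2
  -- points and coefficients indexed by ℕ
  set ν : ℕ → ℕ := fun k => if h : k < p then ((e ⟨k, h⟩ : Fin (2 * s)) : ℕ) else 2 * s + k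
    with hν
  have hν_lt : ∀ k (hk : k < p), ν k = ((e ⟨k, hk⟩ : Fin (2 * s)) : ℕ) := by
    intro k hk; simp only [hν]; rw [dif_pos hk]
  have hν_ge : ∀ k, ¬ k < p → ν k = 2 * s + k := by
    intro k hk; simp only [hν]; rw [dif_neg hk]
  have hν_inj : Function.Injective ν := by
    intro a b hab
    by_cases ha : a < p <;> by_cases hb : b < p
    · rw [hν_lt a ha, hν_lt b hb] at hab
      have h2 : (⟨a, ha⟩ : Fin p) = ⟨b, hb⟩ := e.injective (Fin.val_injective hab)
      simpa using congrArg Fin.val h2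
    · exfalso
      have hlt : ((e ⟨a, ha⟩ : Fin (2 * s)) : ℕ) < 2 * s := (e ⟨a, ha⟩).isLt
      rw [hν_lt a ha, hν_ge b hb] at hab
      omega
    · exfalso
      have hlt : ((e ⟨b, hb⟩ : Fin (2 * s)) : ℕ) < 2 * s := (e ⟨b, hb⟩).isLt
      rw [hν_lt b hb, hν_ge a ha] at hab
      omega
    · rw [hν_ge a ha, hν_ge b hb] at hab
      omega
  set τ : ℕ → ℂ := fun k => ((ν k + 1 : ℕ) : ℂ) with hτ
  have hτ_inj : Function.Injective τ := by
    intro a b hab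
    have : (ν a + 1 : ℕ) = (ν b + 1 : ℕ) := Nat.cast_injective hab
    exact hν_inj (by omega)
  have hτ_ne : ∀ k, τ k ≠ 0 := by
    intro k
    simp only [hτ]
    exact_mod_cast Nat.succ_ne_zero (ν k)
  have hτtt : ∀ k (hk : k < p), τ k = tt (e ⟨k, hk⟩) := by
    intro k hk
    simp [hτ, htt, hν_lt k hk]
  set μ : ℕ → ℂ := fun k => if h : k < p then c (e ⟨k, h⟩) else 0 with hμ
  set P : ℕ := max p s with hP
  have hsP : s ≤ P := le_max_right _ _
  have hpP : p ≤ P := le_max_left _ _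
  have hP2s : P ≤ 2 * s := max_le hp2s (by omega)
  set d : ℕ := P - s with hd
  have hdP : d + s = P := by omega
  have hds : d ≤ s := by omega
  have hμzero : ∀ k, k < P → μ k = 0 → d ≤ k ∧ k < s := by
    intro k hk h0
    have hkp : ¬ k < p := by
      intro h
      apply hcnz ⟨k, h⟩
      simpa [hμ, h] using h0
    constructor <;> omega
  have h0p : 0 < p := hp1
  have hμ0 : μ 0 ≠ 0 := by
    simpa [hμ, h0p] using hcnz ⟨0, h0p⟩
  -- the dependency over range P
  have hsum : ∑ k ∈ Finset.range P, μ k • f (τ k) = 0 := by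
    have h1 : ∑ k ∈ Finset.range P, μ k • f (τ k) = ∑ k ∈ Finset.range p, μ k • f (τ k) := by
      refine (Finset.sum_subset (Finset.range_subset_range.2 hpP) ?_).symm
      intro x _ hxn
      have hx : ¬ x < p := by simpa using hxn
      simp [hμ, hx]
    have h2 : ∑ k ∈ Finset.range p, μ k • f (τ k) = ∑ i : Fin p, c (e i) • f (tt (e i)) := by
      rw [← Fin.sum_univ_eq_sum_range (fun k => μ k • f (τ k)) p]
      refine Finset.sum_congr rfl fun i _ => ?_
      have hi : (i : ℕ) < p := i.isLt
      rw [hτtt _ hi]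
      simp [hμ, hi]
    have hSmap : Finset.map ⟨fun i => e i, e.injective⟩ Finset.univ = S := by
      apply Finset.eq_of_subset_of_card_le
      · intro x hx
        simp only [Finset.mem_map, Finset.mem_univ, true_and, Function.Embedding.coeFn_mk] at hx
        obtain ⟨i, rfl⟩ := hx
        exact heS i
      · simp [hp]
    have h3 : ∑ i : Fin p, c (e i) • f (tt (e i)) = ∑ j ∈ S, c j • f (tt j) := by
      rw [← hSmap, Finset.sum_map]
      rfl
    have h4 : ∑ j ∈ S, c j • f (tt j) = ∑ j : Fin (2 * s), c j • f (tt j) := by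
      refine Finset.sum_subset (Finset.subset_univ S) ?_
      intro x _ hx
      have : c x = 0 := by
        by_contra hne
        exact hx (by simp [hS, hne])
      simp [this]
    rw [h1, h2, h3, h4]
    exact hcsum
  -- the two configurations
  set gn : ℕ → ℂ := fun k => if k < d then μ k else (if μ k = 0 then 1 else 2 * μ k) with hgn
  set g'n : ℕ → ℂ := fun k =>
    if s ≤ k + d then -(μ (k + d)) else (if μ (k + d) = 0 then 1 else μ (k + d)) with hg'n
  set θ : Fin s → ℂ := fun l => τ l with hθ
  set θ' : Fin s → ℂ := fun l => τ ((l : ℕ) + d) with hθ'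
  set g : Fin s → ℂ := fun l => gn l with hg
  set g' : Fin s → ℂ := fun l => g'n l with hg'
  have hθne : ∀ l, θ l ≠ 0 := fun l => hτ_ne _
  have hθ'ne : ∀ l, θ' l ≠ 0 := fun l => hτ_ne _
  have hθinj : Function.Injective θ := by
    intro a b hab
    exact Fin.val_injective (hτ_inj hab)
  have hθ'inj : Function.Injective θ' := by
    intro a b hab
    have := hτ_inj hab
    exact Fin.val_injective (by omega)
  have hgne : ∀ l, g l ≠ 0 := by
    intro l
    by_cases hld : (l : ℕ) < d
    · simp only [hg, hgn, hld, if_true]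
      intro h0
      have := hμzero l (lt_of_lt_of_le l.isLt hsP) h0
      omega
    · by_cases hm : μ (l : ℕ) = 0
      · simp [hg, hgn, hld, hm]
      · simp only [hg, hgn, hld, if_false, hm, if_neg]
        exact mul_ne_zero two_ne_zero hm
  have hg'ne : ∀ l, g' l ≠ 0 := by
    intro l
    have hlP : (l : ℕ) + d < P := by
      have := l.isLt
      omega
    by_cases hld : s ≤ (l : ℕ) + d
    · simp only [hg', hg'n, hld, if_true, neg_ne_zero]
      intro h0
      have := hμzero _ hlP h0
      omega
    · by_cases hm : μ ((l : ℕ) + d) = 0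
      · simp [hg', hg'n, hld, hm]
      · simp [hg', hg'n, hld, hm]
  -- measurement equality
  have hmeas : (∑ l, g l • f (θ l)) = ∑ l, g' l • f (θ' l) := by
    have hA : (∑ l, g l • f (θ l)) = ∑ k ∈ Finset.range s, gn k • f (τ k) :=
      Fin.sum_univ_eq_sum_range (fun k => gn k • f (τ k)) s
    have hB : (∑ l, g' l • f (θ' l)) = ∑ k ∈ Finset.range s, g'n k • f (τ (k + d)) :=
      Fin.sum_univ_eq_sum_range (fun k => g'n k • f (τ (k + d))) s
    rw [hA, hB]
    have hshift : ∑ k ∈ Finset.range s, g'n k • f (τ (k + d))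
        = ∑ j ∈ Finset.Ico d P, g'n (j - d) • f (τ j) := by
      rw [Finset.sum_Ico_eq_sum_range]
      have hPd : P - d = s := by omega
      rw [hPd]
      refine Finset.sum_congr rfl fun k _ => ?_
      have h1 : d + k - d = k := by omega
      rw [h1, Nat.add_comm d k]
    have key : ∑ k ∈ Finset.range s, gn k • f (τ k)
        = (∑ j ∈ Finset.Ico d P, g'n (j - d) • f (τ j))
          + ∑ k ∈ Finset.range P, μ k • f (τ k) := by
      rw [Finset.range_eq_Ico, Finset.range_eq_Ico]
      rw [← Finset.sum_Ico_consecutive (fun k => gn k • f (τ k)) (Nat.zero_le d) hds]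
      rw [← Finset.sum_Ico_consecutive (fun j => g'n (j - d) • f (τ j)) hds hsP]
      rw [← Finset.sum_Ico_consecutive (fun k => μ k • f (τ k)) (Nat.zero_le d)
        (le_trans hds hsP)]
      rw [← Finset.sum_Ico_consecutive (fun k => μ k • f (τ k)) hds hsP]
      have c1 : ∑ k ∈ Finset.Ico 0 d, gn k • f (τ k) = ∑ k ∈ Finset.Ico 0 d, μ k • f (τ k) := by
        refine Finset.sum_congr rfl fun k hk => ?_
        have : k < d := (Finset.mem_Ico.1 hk).2
        simp [hgn, this]
      have c2 : ∑ k ∈ Finset.Ico d s, gn k • f (τ k)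
          = (∑ k ∈ Finset.Ico d s, g'n (k - d) • f (τ k))
            + ∑ k ∈ Finset.Ico d s, μ k • f (τ k) := by
        rw [← Finset.sum_add_distrib]
        refine Finset.sum_congr rfl fun k hk => ?_
        obtain ⟨hk1, hk2⟩ := Finset.mem_Ico.1 hk
        have hkd : k - d + d = k := by omega
        have hns : ¬ s ≤ k := by omega
        have hnd : ¬ k < d := by omega
        by_cases hm : μ k = 0
        · simp [hgn, hg'n, hnd, hns, hkd, hm]
        · simp only [hgn, hg'n, hnd, if_false, hns, hkd, hm, if_neg]
          rw [← add_smul]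
          congr 1
          ring
      have c3 : ∑ k ∈ Finset.Ico s P, g'n (k - d) • f (τ k)
          = -∑ k ∈ Finset.Ico s P, μ k • f (τ k) := by
        rw [← Finset.sum_neg_distrib]
        refine Finset.sum_congr rfl fun k hk => ?_
        obtain ⟨hk1, hk2⟩ := Finset.mem_Ico.1 hk
        have hkd : k - d + d = k := by omega
        have hks : s ≤ k := by omega
        simp [hg'n, hks, hkd, neg_smul]
      rw [c1, c2, c3]
      abel
    rw [hsum, add_zero] at key
    rw [key, hshift]
  -- apply uniqueness and derive a contradiction
  have hmult := huniq θ θ' g g' hθne hθinj hθ'ne hθ'inj hgne hg'ne hmeas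
  set l0 : Fin s := ⟨0, hs⟩ with hl0def
  have hmem : (θ l0, g l0) ∈ Multiset.map (fun l : Fin s => (θ l, g l)) Finset.univ.val :=
    Multiset.mem_map.2 ⟨l0, Finset.mem_def.1 (Finset.mem_univ l0), rfl⟩
  rw [hmult] at hmem
  obtain ⟨l, _, heq⟩ := Multiset.mem_map.1 hmem
  obtain ⟨h1, h2⟩ := Prod.mk.inj heq
  have h3 : (l : ℕ) + d = (l0 : ℕ) := hτ_inj h1
  have hl0v : (l0 : ℕ) = 0 := rfl
  rw [hl0v] at h3
  have hd0 : d = 0 := by omega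
  have hlv : (l : ℕ) = 0 := by omega
  have hns0 : ¬ s ≤ 0 + 0 := by omega
  have hn00 : ¬ (0 : ℕ) < 0 := by omega
  rw [hg', hg, hg'n, hgn] at h2
  simp only [hlv, hl0v, hd0, hns0, hn00, if_false, Nat.add_zero, hμ0, if_neg] at h2
  -- h2 : μ 0 = 2 * μ 0
  apply hμ0
  linear_combination -h2

theorem lower_bounds_of_unique_recovery (s n m : ℕ) (hs : 1 ≤ s) (hn : 1 ≤ n) (hm : 1 ≤ m)
    (z : Fin m → ℂ)
    (huniq : ∀ θ θ' g g' : Fin s → ℂ,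
      (∀ l, θ l ≠ 0) → Function.Injective θ →
      (∀ l, θ' l ≠ 0) → Function.Injective θ' →
      (∀ l, g l ≠ 0) → (∀ l, g' l ≠ 0) →
      ((vand n m z).transpose * vand n s θ).mulVec g =
        ((vand n m z).transpose * vand n s θ').mulVec g' →
      (Finset.univ.val.map fun l : Fin s => (θ l, g l)) =
        (Finset.univ.val.map fun l : Fin s => (θ' l, g' l))) :
    2 * s ≤ n ∧ 2 * s ≤ m := by
  classical
  set L : (Fin n → ℂ) →ₗ[ℂ] (Fin m → ℂ) := ((vand n m z).transpose).mulVecLin with hL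
  set v : ℂ → (Fin n → ℂ) := fun t => fun j : Fin n => t ^ (j : ℕ) with hv
  set f : ℂ → (Fin m → ℂ) := fun t => L (v t) with hf
  have hmeasform : ∀ (θ g : Fin s → ℂ),
      ((vand n m z).transpose * vand n s θ).mulVec g = ∑ l : Fin s, g l • f (θ l) := by
    intro θ g
    rw [← Matrix.mulVec_mulVec]
    have h1 : (vand n s θ).mulVec g = ∑ l : Fin s, g l • v (θ l) := by
      funext j
      simp [Matrix.mulVec, dotProduct, vand, hv, Finset.sum_apply, mul_comm]
    rw [h1, ← Matrix.mulVecLin_apply, ← hL, map_sum]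
    simp [hf]
  have huniq' : ∀ θ θ' g g' : Fin s → ℂ,
      (∀ l, θ l ≠ 0) → Function.Injective θ →
      (∀ l, θ' l ≠ 0) → Function.Injective θ' →
      (∀ l, g l ≠ 0) → (∀ l, g' l ≠ 0) →
      (∑ l, g l • f (θ l)) = (∑ l, g' l • f (θ' l)) →
      (Finset.univ.val.map fun l : Fin s => (θ l, g l)) =
        (Finset.univ.val.map fun l : Fin s => (θ' l, g' l)) := by
    intro θ θ' g g' a1 a2 a3 a4 a5 a6 hsum
    refine huniq θ θ' g g' a1 a2 a3 a4 a5 a6 ?_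
    rw [hmeasform θ g, hmeasform θ' g', hsum]
  constructor
  · by_contra hcon
    have hn2 : n < 2 * s := by omega
    have hdep : ¬ LinearIndependent ℂ (fun i : Fin (2 * s) => v ((((i : ℕ) + 1 : ℕ)) : ℂ)) := by
      intro hLI
      have hc := hLI.fintype_card_le_finrank
      rw [Module.finrank_fin_fun, Fintype.card_fin] at hc
      omega
    obtain ⟨c, hc, i, hi⟩ := Fintype.not_linearIndependent_iff.1 hdep
    refine aux_main s hs f huniq' c ?_ ⟨i, hi⟩
    have heq : (∑ i : Fin (2 * s), c i • f ((((i : ℕ) + 1 : ℕ)) : ℂ))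
        = L (∑ i : Fin (2 * s), c i • v ((((i : ℕ) + 1 : ℕ)) : ℂ)) := by
      rw [map_sum]
      simp [hf]
    rw [heq, hc, map_zero]
  · by_contra hcon
    have hm2 : m < 2 * s := by omega
    have hdep : ¬ LinearIndependent ℂ (fun i : Fin (2 * s) => f ((((i : ℕ) + 1 : ℕ)) : ℂ)) := by
      intro hLI
      have hc := hLI.fintype_card_le_finrank
      rw [Module.finrank_fin_fun, Fintype.card_fin] at hc
      omega
    obtain ⟨c, hc, i, hi⟩ := Fintype.not_linearIndependent_iff.1 hdep
    exact aux_main s hs f huniq' c hc ⟨i, hi⟩
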